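/- Assume F : ℝ^n ⇒ ℝ^n is SCD regular around (x̄, ȳ) ∈ gph F. Then there is a neighborhood W of (x̄, ȳ) such that F is SCD regular around every (x, y) ∈ gph F ∩ W, and limsup_{(x,y)→(x̄,ȳ), (x,y)∈gph F} scd reg F(x, y) ≤ scd reg F(x̄, ȳ). -/

import Mathlib

open Filter Topology Metric Set
open scoped InnerProductSpace RealInnerProductSpace ENNReal NNReal

noncomputable section

namespace SCD

abbrev E (n : ℕ) := EuclideanSpace ℝ (Fin n)
abbrev E2 (n : ℕ) := WithLp 2 (E n × E n)

variable {n : ℕ}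

def lp2 (n : ℕ) : E2 n ≃ₗ[ℝ] E n × E n := WithLp.linearEquiv 2 ℝ (E n × E n)
def mk2 (u v : E n) : E2 n := (lp2 n).symm (u, v)
def fst2 (z : E2 n) : E n := (lp2 n z).1
def snd2 (z : E2 n) : E n := (lp2 n z).2

instance : FiniteDimensional ℝ (E2 n) := Module.Finite.equiv (lp2 n).symm

def tcone {H : Type*} [NormedAddCommGroup H] [NormedSpace ℝ H] (A : Set H) (z : H) : Set H :=
  {w | ∃ t : ℕ → ℝ, ∃ wk : ℕ → H, (∀ k, 0 < t k) ∧ Tendsto t atTop (𝓝 0) ∧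
      Tendsto wk atTop (𝓝 w) ∧ ∀ k, z + t k • wk k ∈ A}

def gph (F : E n → Set (E n)) : Set (E2 n) := {z | snd2 z ∈ F (fst2 z)}
def projC (L : Submodule ℝ (E2 n)) : E2 n →L[ℝ] E2 n := L.subtypeL.comp (L.orthogonalProjectionOnto)
def dZ (L₁ L₂ : Submodule ℝ (E2 n)) : ℝ := ‖projC L₁ - projC L₂‖

def Sneg (n : ℕ) : E2 n ≃ₗ[ℝ] E2 n :=
  (lp2 n).trans (((LinearEquiv.prodComm ℝ (E n) (E n)).trans
    ((LinearEquiv.neg ℝ).prodCongr (LinearEquiv.refl ℝ (E n)))).trans (lp2 n).symm)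

def adjS (L : Submodule ℝ (E2 n)) : Submodule ℝ (E2 n) := Lᗮ.map (Sneg n).toLinearMap

/-- `O_F`: the set of points of `gph F` where `F` is graphically smooth of dimension `n`,
i.e. the tangent cone to the graph is an `n`-dimensional linear subspace. -/
def OF (F : E n → Set (E n)) : Set (E2 n) :=
  {z | z ∈ gph F ∧ ∃ L : Submodule ℝ (E2 n),
    Module.finrank ℝ L = n ∧ (L : Set (E2 n)) = tcone (gph F) z}

/-- The primal generalized derivative `Sp F(x,y)`. -/
def Sp (F : E n → Set (E n)) (z : E2 n) : Set (Submodule ℝ (E2 n)) :=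
  {L | Module.finrank ℝ L = n ∧ ∃ (zk : ℕ → E2 n) (Lk : ℕ → Submodule ℝ (E2 n)),
      (∀ k, zk k ∈ gph F ∧ Module.finrank ℝ (Lk k) = n ∧
        ((Lk k : Set (E2 n)) = tcone (gph F) (zk k))) ∧
      Tendsto zk atTop (𝓝 z) ∧ Tendsto (fun k => dZ (Lk k) L) atTop (𝓝 0)}

/-- The dual generalized derivative `Sp* F(x,y)`. -/
def SpStar (F : E n → Set (E n)) (z : E2 n) : Set (Submodule ℝ (E2 n)) :=
  {L' | ∃ L ∈ Sp F z, L' = adjS L}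

/-- `F` has the SCD property at `z ∈ gph F`. -/
def SCDAt (F : E n → Set (E n)) (z : E2 n) : Prop := (Sp F z).Nonempty

/-- `F` has the SCD property around `z ∈ gph F`. -/
def SCDAround (F : E n → Set (E n)) (z : E2 n) : Prop :=
  ∃ δ > (0 : ℝ), ∀ z' ∈ gph F, dist z' z < δ → SCDAt F z'

/-- `Z_n^{reg}`: the subspaces `L ∈ Z_n` such that `(y*, 0) ∈ L` implies `y* = 0`. -/
def Znreg (n : ℕ) : Set (Submodule ℝ (E2 n)) :=
  {L | Module.finrank ℝ L = n ∧ ∀ y : E n, mk2 y 0 ∈ L → y = 0}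

/-- `F` is SCD regular around `z ∈ gph F`. -/
def SCDRegularAround (F : E n → Set (E n)) (z : E2 n) : Prop :=
  SCDAround F z ∧ ∀ L ∈ SpStar F z, L ∈ Znreg n

/-- The set of values `‖y*‖` for `(y*, x*)` in some `L ∈ Sp* F(x,y)` with `‖x*‖ ≤ 1`;
its supremum is the modulus of SCD regularity. -/
def scdregSet (F : E n → Set (E n)) (z : E2 n) : Set ℝ :=
  {r | ∃ L ∈ SpStar F z, ∃ w : E2 n, w ∈ L ∧ ‖snd2 w‖ ≤ 1 ∧ r = ‖fst2 w‖}

/-- The modulus of SCD regularity `scd reg F(x,y)`. -/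
def scdreg (F : E n → Set (E n)) (z : E2 n) : ℝ := sSup (scdregSet F z)

/-- The graph of the outer limiting graphical derivative `D^♯F(x̄,ȳ)`. -/
def DsharpG (F : E n → Set (E n)) (z : E2 n) : Set (E2 n) :=
  {w | ∃ (zk : ℕ → E2 n) (wk : ℕ → E2 n),
    (∀ k, zk k ∈ gph F ∧ wk k ∈ tcone (gph F) (zk k)) ∧
    Tendsto zk atTop (𝓝 z) ∧ Tendsto wk atTop (𝓝 w)}

/-- The regular (Fréchet) normal cone: the polar of the tangent cone. -/
def regN (A : Set (E2 n)) (z : E2 n) : Set (E2 n) := {w | ∀ v ∈ tcone A z, ⟪w, v⟫_ℝ ≤ 0}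

/-- The limiting (Mordukhovich) normal cone. -/
def limN (A : Set (E2 n)) (z : E2 n) : Set (E2 n) :=
  {w | ∃ (zk wk : ℕ → E2 n), (∀ k, zk k ∈ A ∧ wk k ∈ regN A (zk k)) ∧
    Tendsto zk atTop (𝓝 z) ∧ Tendsto wk atTop (𝓝 w)}

/-- The graph of the limiting coderivative: `(y*, x*)` with `(x*, -y*)` in the limiting
normal cone to the graph. -/
def coderivG (F : E n → Set (E n)) (z : E2 n) : Set (E2 n) :=
  {w | mk2 (snd2 w) (-(fst2 w)) ∈ limN (gph F) z}

/-- The graph of the strict (paratingent) derivative `D_*F(x̄,ȳ)`. -/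
def paraconeG (F : E n → Set (E n)) (z : E2 n) : Set (E2 n) :=
  {w | ∃ (t : ℕ → ℝ) (z1 z2 : ℕ → E2 n), (∀ k, 0 < t k) ∧ Tendsto t atTop (𝓝 0) ∧
    (∀ k, z1 k ∈ gph F ∧ z2 k ∈ gph F) ∧ Tendsto z1 atTop (𝓝 z) ∧ Tendsto z2 atTop (𝓝 z) ∧
    Tendsto (fun k => (t k)⁻¹ • (z2 k - z1 k)) atTop (𝓝 w)}

/-- The B-subdifferential of `f : U → ℝ^n` at `x`. -/
def Bsub (f : E n → E n) (U : Set (E n)) (x : E n) : Set (E n →L[ℝ] E n) :=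
  {A | ∃ xk : ℕ → E n, (∀ k, xk k ∈ U ∧ DifferentiableAt ℝ f (xk k)) ∧
    Tendsto xk atTop (𝓝 x) ∧ Tendsto (fun k => fderiv ℝ f (xk k)) atTop (𝓝 A)}

/-- A single-valued map `f` on `U` viewed as a set-valued map. -/
def sv (f : E n → E n) (U : Set (E n)) : E n → Set (E n) := fun x => {y | x ∈ U ∧ y = f x}

/-- The linear map `u ↦ (u, A u)`. -/
def graphMap (A : E n →L[ℝ] E n) : E n →ₗ[ℝ] E2 n :=
  (lp2 n).symm.toLinearMap.comp (LinearMap.prod LinearMap.id A.toLinearMap)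

/-- The subspace `rge(I, A) = {(u, Au) : u ∈ ℝ^n}`. -/
def rgeIA (A : E n →L[ℝ] E n) : Submodule ℝ (E2 n) := LinearMap.range (graphMap A)

/-- The linear map `p ↦ (C p, p)`. -/
def graphMapRev (C : E n →L[ℝ] E n) : E n →ₗ[ℝ] E2 n :=
  (lp2 n).symm.toLinearMap.comp (LinearMap.prod C.toLinearMap LinearMap.id)

/-- The subspace `rge(C, I) = {(C p, p) : p ∈ ℝ^n}`. -/
def rgeCI (C : E n →L[ℝ] E n) : Submodule ℝ (E2 n) := LinearMap.range (graphMapRev C)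

/-- The preimage map `F^{-1}(y)`. -/
def Finv (F : E n → Set (E n)) (y : E n) : Set (E n) := {x | y ∈ F x}

/-- Metric subregularity at `z ∈ gph F` with constant `κ`. -/
def SubregWith (F : E n → Set (E n)) (z : E2 n) (κ : ℝ) : Prop :=
  ∃ δ > (0 : ℝ), ∀ x' : E n, dist x' (fst2 z) < δ →
    EMetric.infEdist x' (Finv F (snd2 z)) ≤ ENNReal.ofReal κ * EMetric.infEdist (snd2 z) (F x')

/-- `F` is metrically subregular at `z ∈ gph F`. -/
def SubregAt (F : E n → Set (E n)) (z : E2 n) : Prop := ∃ κ, 0 ≤ κ ∧ SubregWith F z κ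

/-- The modulus of metric subregularity `subreg F(x,y)`. -/
def subregMod (F : E n → Set (E n)) (z : E2 n) : ℝ := sInf {κ | 0 ≤ κ ∧ SubregWith F z κ}

/-- `F` is strongly metrically subregular at `z ∈ gph F`. -/
def StrSubregAt (F : E n → Set (E n)) (z : E2 n) : Prop :=
  SubregAt F z ∧ ∃ δ > (0 : ℝ), ∀ x' ∈ Finv F (snd2 z), dist x' (fst2 z) < δ → x' = fst2 z

/-- `F` is strongly metrically subregular around `zb ∈ gph F` (with finite `lsubreg`). -/
def StrSubregAround (F : E n → Set (E n)) (zb : E2 n) : Prop :=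
  ∃ δ > (0 : ℝ), (∀ z ∈ gph F, dist z zb < δ → StrSubregAt F z) ∧
    ∃ c : ℝ, ∀ z ∈ gph F, dist z zb < δ → subregMod F z ≤ c

/-- `lsubreg F(x̄,ȳ)`: the limsup of `subreg F(x,y)` over graph points `(x,y) → (x̄,ȳ)`. -/
def lsubreg (F : E n → Set (E n)) (zb : E2 n) : ℝ :=
  Filter.limsup (fun z => subregMod F z) (𝓝[gph F] zb)

/-- Metric regularity around `zb ∈ gph F` with constant `κ`. -/
def RegWith (F : E n → Set (E n)) (zb : E2 n) (κ : ℝ) : Prop :=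
  ∃ δ > (0 : ℝ), ∀ x y : E n, dist x (fst2 zb) < δ → dist y (snd2 zb) < δ →
    EMetric.infEdist x (Finv F y) ≤ ENNReal.ofReal κ * EMetric.infEdist y (F x)

/-- `F` is metrically regular around `zb ∈ gph F`. -/
def MetrRegAround (F : E n → Set (E n)) (zb : E2 n) : Prop := ∃ κ, 0 ≤ κ ∧ RegWith F zb κ

/-- The modulus of metric regularity `reg F(x̄,ȳ)`. -/
def regMod (F : E n → Set (E n)) (zb : E2 n) : ℝ := sInf {κ | 0 ≤ κ ∧ RegWith F zb κ}

/-- `F` is strongly metrically regular around `zb ∈ gph F`: metrically regular and `F⁻¹`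
has a single-valued localization around `(ȳ, x̄)`. -/
def StrRegAround (F : E n → Set (E n)) (zb : E2 n) : Prop :=
  MetrRegAround F zb ∧
  ∃ (X' Y' : Set (E n)) (h : E n → E n), IsOpen X' ∧ IsOpen Y' ∧
    fst2 zb ∈ X' ∧ snd2 zb ∈ Y' ∧ h (snd2 zb) = fst2 zb ∧
    gph F ∩ {w | fst2 w ∈ X' ∧ snd2 w ∈ Y'} = {w | snd2 w ∈ Y' ∧ fst2 w = h (snd2 w)}

/-- `F` is SCD semismooth* at `zb ∈ gph F`. -/
def SCDSemismoothAt (F : E n → Set (E n)) (zb : E2 n) : Prop :=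
  SCDAround F zb ∧ ∀ ε > (0 : ℝ), ∃ δ > (0 : ℝ), ∀ z ∈ gph F, dist z zb ≤ δ →
    ∀ L ∈ SpStar F z, ∀ w : E2 n, w ∈ L →
      |⟪snd2 w, fst2 z - fst2 zb⟫_ℝ - ⟪fst2 w, snd2 z - snd2 zb⟫_ℝ| ≤ ε * ‖z - zb‖ * ‖w‖

/-- `F` is graphically Lipschitzian of dimension `n` at `zb` with transformation mapping `Φ`,
local inverse `Ψ`, neighborhood `W`, and `K`-Lipschitz map `f : U → ℝ^n`. -/
def GraphLipWith (F : E n → Set (E n)) (zb : E2 n) (Φ Ψ : E2 n → E2 n)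
    (W : Set (E2 n)) (U : Set (E n)) (f : E n → E n) (K : ℝ≥0) : Prop :=
  IsOpen W ∧ zb ∈ W ∧ ContDiffOn ℝ 1 Φ W ∧ Set.InjOn Φ W ∧ IsOpen (Φ '' W) ∧
  ContDiffOn ℝ 1 Ψ (Φ '' W) ∧ Set.LeftInvOn Ψ Φ W ∧
  IsOpen U ∧ LipschitzOnWith K f U ∧
  Φ '' (gph F ∩ W) = {w | fst2 w ∈ U ∧ snd2 w = f (fst2 w)}

/-- `F` is graphically Lipschitzian of dimension `n` at `zb` with transformation mapping `Φ`. -/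
def GraphLipAt (F : E n → Set (E n)) (zb : E2 n) (Φ : E2 n → E2 n) : Prop :=
  ∃ Ψ W U f K, GraphLipWith F zb Φ Ψ W U f K

/-- `∇̄^Φ F(x̄,ȳ)`: the `(2n)×n` matrices `Z` (as linear maps `ℝ^n → ℝ^{2n}`) with
`rge Z ∈ Sp F(x̄,ȳ)` and upper block of `∇Φ(x̄,ȳ)Z` equal to the identity. -/
def BsubPhi (F : E n → Set (E n)) (zb : E2 n) (Φ : E2 n → E2 n) : Set (E n →L[ℝ] E2 n) :=
  {Z | LinearMap.range (Z : E n →ₗ[ℝ] E2 n) ∈ Sp F zb ∧ ∀ p, fst2 (fderiv ℝ Φ zb (Z p)) = p}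

/-- A (globally) monotone set-valued map. -/
def MonoMap (T : E n → Set (E n)) : Prop :=
  ∀ x₁ y₁ x₂ y₂, y₁ ∈ T x₁ → y₂ ∈ T x₂ → 0 ≤ ⟪y₁ - y₂, x₁ - x₂⟫_ℝ

/-- `F` is locally maximally monotone at `z ∈ gph F`. -/
def LocMaxMonoAt (F : E n → Set (E n)) (z : E2 n) : Prop :=
  ∃ X Y : Set (E n), IsOpen X ∧ IsOpen Y ∧ fst2 z ∈ X ∧ snd2 z ∈ Y ∧
    (∀ w₁ ∈ gph F ∩ {w | fst2 w ∈ X ∧ snd2 w ∈ Y},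
     ∀ w₂ ∈ gph F ∩ {w | fst2 w ∈ X ∧ snd2 w ∈ Y},
       0 ≤ ⟪snd2 w₁ - snd2 w₂, fst2 w₁ - fst2 w₂⟫_ℝ) ∧
    ∀ T : E n → Set (E n), MonoMap T →
      gph F ∩ {w | fst2 w ∈ X ∧ snd2 w ∈ Y} ⊆ gph T →
      gph F ∩ {w | fst2 w ∈ X ∧ snd2 w ∈ Y} = gph T ∩ {w | fst2 w ∈ X ∧ snd2 w ∈ Y}

/-- `F` is locally maximally hypomonotone at `z ∈ gph F`:
`γI + F` is locally maximally monotone at `(x, γx + y)` for some `γ ≥ 0`. -/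
def LocMaxHypoAt (F : E n → Set (E n)) (z : E2 n) : Prop :=
  ∃ γ : ℝ, 0 ≤ γ ∧ LocMaxMonoAt (fun x => (fun y => γ • x + y) '' F x)
    (mk2 (fst2 z) (γ • fst2 z + snd2 z))

/-- A firmly nonexpansive matrix: `⟨Bv, v⟩ ≥ ‖Bv‖²` for all `v`. -/
def FirmNonexp (B : E n →L[ℝ] E n) : Prop := ∀ v, ‖B v‖ ^ 2 ≤ ⟪B v, v⟫_ℝ


set_option synthInstance.maxHeartbeats 1000000
set_option maxHeartbeats 2000000
section Aux
variable {n : ℕ}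
open Module

lemma projC_apply_mem (L : Submodule ℝ (E2 n)) (x : E2 n) : projC L x ∈ L :=
  (L.orthogonalProjectionOnto x).2

lemma projC_eq_self {L : Submodule ℝ (E2 n)} {x : E2 n} (h : x ∈ L) : projC L x = x :=
  Submodule.starProjection_eq_self_iff.mpr h

lemma projC_eq_zero {L : Submodule ℝ (E2 n)} {x : E2 n} (h : x ∈ Lᗮ) : projC L x = 0 := by
  have : L.orthogonalProjectionOnto x = 0 := Submodule.orthogonalProjectionOnto_eq_zero_iff.mpr h
  simp [projC, this]

lemma mem_orthogonal_of_projC_eq_zero {L : Submodule ℝ (E2 n)} {x : E2 n}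
    (h : projC L x = 0) : x ∈ Lᗮ := by
  have h2 : x - projC L x ∈ Lᗮ := Submodule.sub_starProjection_mem_orthogonal (K := L) x
  simpa [h] using h2

lemma norm_projC_apply_le (L : Submodule ℝ (E2 n)) (x : E2 n) : ‖projC L x‖ ≤ ‖x‖ := by
  have h1 : ‖projC L x‖ ≤ ‖projC L‖ * ‖x‖ := (projC L).le_opNorm x
  have h2 : ‖projC L‖ ≤ 1 := by
    refine ContinuousLinearMap.opNorm_le_bound _ zero_le_one (fun y => ?_)
    rw [one_mul]
    calc ‖projC L y‖ = ‖L.orthogonalProjectionOnto y‖ := rfl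
    _ ≤ ‖L.orthogonalProjectionOnto‖ * ‖y‖ := (L.orthogonalProjectionOnto).le_opNorm y
    _ ≤ 1 * ‖y‖ := by gcongr; exact Submodule.orthogonalProjectionOnto_norm_le L
    _ = ‖y‖ := one_mul _
  calc ‖projC L x‖ ≤ ‖projC L‖ * ‖x‖ := h1
  _ ≤ 1 * ‖x‖ := mul_le_mul_of_nonneg_right h2 (norm_nonneg x)
  _ = ‖x‖ := one_mul _

lemma norm_projC_le (L : Submodule ℝ (E2 n)) : ‖projC L‖ ≤ 1 :=
  ContinuousLinearMap.opNorm_le_bound _ zero_le_one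
    (fun x => by rw [one_mul]; exact norm_projC_apply_le L x)

lemma finrank_E2 : finrank ℝ (E2 n) = n + n := by
  rw [(lp2 n).finrank_eq]
  simp [finrank_prod]

lemma projC_idem (L : Submodule ℝ (E2 n)) : (projC L).comp (projC L) = projC L := by
  ext x
  exact projC_eq_self (projC_apply_mem L x)

lemma projC_inner (L : Submodule ℝ (E2 n)) (x y : E2 n) :
    ⟪projC L x, y⟫_ℝ = ⟪x, projC L y⟫_ℝ :=
  Submodule.inner_starProjection_left_eq_right L x y

end Aux
section Aux2
variable {n : ℕ}
open Module

example (z : E2 n) : fst2 z = (WithLp.equiv 2 (E n × E n) z).1 := rfl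
example (z : E2 n) : fst2 z = z.fst := rfl

lemma norm_sq_eq (z : E2 n) : ‖z‖^2 = ‖fst2 z‖^2 + ‖snd2 z‖^2 :=
  WithLp.prod_norm_sq_eq_of_L2 z

lemma mk2_fst2_snd2 (z : E2 n) : mk2 (fst2 z) (snd2 z) = z := by
  simp [mk2, fst2, snd2]

lemma fst2_mk2 (u v : E n) : fst2 (mk2 u v) = u := by simp [mk2, fst2]
lemma snd2_mk2 (u v : E n) : snd2 (mk2 u v) = v := by simp [mk2, snd2]

lemma norm_mk2_left (y : E n) : ‖mk2 y 0‖ = ‖y‖ := by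
  have h := norm_sq_eq (mk2 y 0)
  rw [fst2_mk2, snd2_mk2] at h
  simp at h
  nlinarith [norm_nonneg (mk2 y 0), norm_nonneg y]

lemma norm_fst2_le (z : E2 n) : ‖fst2 z‖ ≤ ‖z‖ := by
  nlinarith [norm_sq_eq z, norm_nonneg (snd2 z), norm_nonneg z, norm_nonneg (fst2 z)]

lemma norm_snd2_le (z : E2 n) : ‖snd2 z‖ ≤ ‖z‖ := by
  nlinarith [norm_sq_eq z, norm_nonneg (snd2 z), norm_nonneg z, norm_nonneg (fst2 z)]

lemma continuous_fst2 : Continuous (fst2 (n := n)) :=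
  (LinearMap.continuous_of_finiteDimensional
    ((LinearMap.fst ℝ (E n) (E n)).comp (lp2 n).toLinearMap))

lemma continuous_snd2 : Continuous (snd2 (n := n)) :=
  (LinearMap.continuous_of_finiteDimensional
    ((LinearMap.snd ℝ (E n) (E n)).comp (lp2 n).toLinearMap))

lemma mk2_smul (c : ℝ) (u v : E n) : mk2 (c • u) (c • v) = c • mk2 u v := by
  simp [mk2, ← Prod.smul_mk]

lemma dZ_triangle (L1 L2 L3 : Submodule ℝ (E2 n)) : dZ L1 L3 ≤ dZ L1 L2 + dZ L2 L3 := by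
  have h : projC L1 - projC L3 = (projC L1 - projC L2) + (projC L2 - projC L3) := by abel
  rw [dZ, dZ, dZ, h]
  exact norm_add_le _ _

lemma dZ_nonneg (L1 L2 : Submodule ℝ (E2 n)) : 0 ≤ dZ L1 L2 := norm_nonneg _

end Aux2
section Aux3
variable {n : ℕ}
open Module

lemma continuous_Sneg : Continuous (Sneg n) :=
  LinearMap.continuous_of_finiteDimensional (Sneg n).toLinearMap

lemma continuous_Sneg_symm : Continuous (Sneg n).symm :=
  LinearMap.continuous_of_finiteDimensional (Sneg n).symm.toLinearMap

lemma finrank_adjS {L : Submodule ℝ (E2 n)} (h : finrank ℝ L = n) :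
    finrank ℝ (adjS L) = n := by
  rw [adjS, LinearEquiv.finrank_map_eq]
  have := Submodule.finrank_add_finrank_orthogonal (K := L)
  rw [h, finrank_E2] at this
  omega

lemma mem_adjS_iff {L : Submodule ℝ (E2 n)} {w : E2 n} :
    w ∈ adjS L ↔ (Sneg n).symm w ∈ Lᗮ := by
  constructor
  · rintro ⟨u, hu, rfl⟩
    simpa using hu
  · intro h
    exact ⟨(Sneg n).symm w, h, by simp⟩

end Aux3
section Aux4
variable {n : ℕ}
open Module

lemma tendsto_projC_of_dZ {L : ℕ → Submodule ℝ (E2 n)} {M : Submodule ℝ (E2 n)}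
    (h : Tendsto (fun j => dZ (L j) M) atTop (𝓝 0)) :
    Tendsto (fun j => projC (L j)) atTop (𝓝 (projC M)) := by
  rw [tendsto_iff_norm_sub_tendsto_zero]
  exact h

lemma tendsto_apply_of_tendsto {P : ℕ → E2 n →L[ℝ] E2 n} {Q : E2 n →L[ℝ] E2 n}
    {u : ℕ → E2 n} {v : E2 n} (hP : Tendsto P atTop (𝓝 Q)) (hu : Tendsto u atTop (𝓝 v)) :
    Tendsto (fun j => P j (u j)) atTop (𝓝 (Q v)) := by
  have := (isBoundedBilinearMap_apply (𝕜 := ℝ) (E := E2 n) (F := E2 n)).continuous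
  exact (this.tendsto (Q, v)).comp (hP.prodMk_nhds hu)

lemma mem_adjS_of_tendsto {L : ℕ → Submodule ℝ (E2 n)} {M : Submodule ℝ (E2 n)}
    (hd : Tendsto (fun j => dZ (L j) M) atTop (𝓝 0))
    {w : ℕ → E2 n} (hw : ∀ j, w j ∈ adjS (L j)) {wl : E2 n}
    (hwl : Tendsto w atTop (𝓝 wl)) : wl ∈ adjS M := by
  rw [mem_adjS_iff]
  set u : ℕ → E2 n := fun j => (Sneg n).symm (w j) with hu
  have hu_t : Tendsto u atTop (𝓝 ((Sneg n).symm wl)) :=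
    (continuous_Sneg_symm.tendsto wl).comp hwl
  have huL : ∀ j, projC (L j) (u j) = 0 := fun j =>
    projC_eq_zero ((mem_adjS_iff).mp (hw j))
  have : Tendsto (fun j => projC (L j) (u j)) atTop (𝓝 (projC M ((Sneg n).symm wl))) :=
    tendsto_apply_of_tendsto (tendsto_projC_of_dZ hd) hu_t
  rw [funext huL] at this
  have h0 : projC M ((Sneg n).symm wl) = 0 :=
    (tendsto_nhds_unique tendsto_const_nhds this).symm
  exact mem_orthogonal_of_projC_eq_zero h0

end Aux4
set_option synthInstance.maxHeartbeats 1000000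
set_option maxHeartbeats 2000000
section Aux5
variable {n : ℕ}
open Module

lemma exists_subseq_proj (L : ℕ → Submodule ℝ (E2 n)) (h : ∀ j, finrank ℝ (L j) = n) :
    ∃ (M : Submodule ℝ (E2 n)) (φ : ℕ → ℕ), StrictMono φ ∧ finrank ℝ M = n ∧
      Tendsto (fun j => dZ (L (φ j)) M) atTop (𝓝 0) := by
  have hball : ∀ j, projC (L j) ∈ Metric.closedBall (0 : E2 n →L[ℝ] E2 n) 1 := fun j => by
    simpa [Metric.mem_closedBall, dist_zero_right] using norm_projC_le (L j)
  obtain ⟨Q, -, φ, hφ, hconv⟩ :=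
    (isCompact_closedBall (0 : E2 n →L[ℝ] E2 n) 1).tendsto_subseq hball
  have hconv' : Tendsto (fun j => projC (L (φ j))) atTop (𝓝 Q) := hconv
  -- Q is idempotent
  have hidem : ∀ x, Q (Q x) = Q x := by
    intro x
    have h1 : Tendsto (fun j => projC (L (φ j)) x) atTop (𝓝 (Q x)) :=
      tendsto_apply_of_tendsto hconv' tendsto_const_nhds
    have h2 : Tendsto (fun j => projC (L (φ j)) (projC (L (φ j)) x)) atTop (𝓝 (Q (Q x))) :=
      tendsto_apply_of_tendsto hconv' h1
    have h3 : (fun j => projC (L (φ j)) (projC (L (φ j)) x))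
        = fun j => projC (L (φ j)) x := by
      funext j; exact projC_eq_self (projC_apply_mem _ _)
    rw [h3] at h2
    exact tendsto_nhds_unique h2 h1
  -- Q is symmetric
  have hsymm : ∀ x y, ⟪Q x, y⟫_ℝ = ⟪x, Q y⟫_ℝ := by
    intro x y
    have h1 : Tendsto (fun j => ⟪projC (L (φ j)) x, y⟫_ℝ) atTop (𝓝 ⟪Q x, y⟫_ℝ) :=
      (tendsto_apply_of_tendsto hconv' tendsto_const_nhds).inner tendsto_const_nhds
    have h2 : Tendsto (fun j => ⟪x, projC (L (φ j)) y⟫_ℝ) atTop (𝓝 ⟪x, Q y⟫_ℝ) :=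
      Filter.Tendsto.inner tendsto_const_nhds (tendsto_apply_of_tendsto hconv' tendsto_const_nhds)
    have h3 : (fun j => ⟪projC (L (φ j)) x, y⟫_ℝ) = fun j => ⟪x, projC (L (φ j)) y⟫_ℝ := by
      funext j; exact projC_inner _ _ _
    rw [h3] at h1
    exact tendsto_nhds_unique h1 h2
  set M : Submodule ℝ (E2 n) := LinearMap.range (Q : E2 n →ₗ[ℝ] E2 n) with hM
  have hQM : projC M = Q := by
    ext x
    show M.starProjection x = Q x
    refine Submodule.eq_starProjection_of_mem_of_inner_eq_zero (LinearMap.mem_range_self _ x) ?_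
    rintro w ⟨u, rfl⟩
    rw [ContinuousLinearMap.coe_coe, ← hsymm, map_sub, hidem, sub_self, inner_zero_left]
  -- distance tendsto
  have hdist : Tendsto (fun j => dZ (L (φ j)) M) atTop (𝓝 0) := by
    have h0 := tendsto_iff_norm_sub_tendsto_zero.mp hconv'
    simpa [dZ, hQM] using h0
  -- rank
  have hrank : finrank ℝ M = n := by
    have : ∀ᶠ j in atTop, ‖projC (L (φ j)) - Q‖ < 1 := by
      have := (tendsto_iff_norm_sub_tendsto_zero.mp hconv')
      exact this.eventually (eventually_lt_nhds zero_lt_one) |>.mono (fun j hj => hj)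
    obtain ⟨j, hj⟩ := this.exists
    set P := projC (L (φ j)) with hP
    set K := L (φ j) with hK
    have hPK : ∀ x ∈ K, P x = x := fun x hx => projC_eq_self hx
    -- injection K → M
    have hf : ∀ x : K, Q (x : E2 n) ∈ M := fun x => LinearMap.mem_range_self _ _
    let f : K →ₗ[ℝ] M := LinearMap.codRestrict M ((Q : E2 n →ₗ[ℝ] E2 n).comp K.subtype)
      (fun x => hf x)
    have hf_inj : Function.Injective f := by
      rw [← LinearMap.ker_eq_bot, LinearMap.ker_eq_bot']
      intro x hx
      have hx' : Q (x : E2 n) = 0 := congrArg Subtype.val hx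
      have h1 : ‖(x : E2 n)‖ = ‖(P - Q) (x : E2 n)‖ := by
        rw [ContinuousLinearMap.sub_apply, hx', sub_zero, hPK _ x.2]
      have h2 : ‖(P - Q) (x : E2 n)‖ ≤ ‖P - Q‖ * ‖(x : E2 n)‖ := (P - Q).le_opNorm _
      have : ‖(x : E2 n)‖ = 0 := by nlinarith [norm_nonneg (x : E2 n)]
      exact Subtype.ext (norm_eq_zero.mp this)
    -- injection M → K
    have hg : ∀ x : M, P (x : E2 n) ∈ K := fun x => projC_apply_mem _ _
    let g : M →ₗ[ℝ] K := LinearMap.codRestrict K ((P : E2 n →ₗ[ℝ] E2 n).comp M.subtype)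
      (fun x => hg x)
    have hg_inj : Function.Injective g := by
      rw [← LinearMap.ker_eq_bot, LinearMap.ker_eq_bot']
      intro x hx
      have hx' : P (x : E2 n) = 0 := congrArg Subtype.val hx
      have hQx : Q (x : E2 n) = (x : E2 n) := by
        obtain ⟨u, hu⟩ := x.2
        rw [← hu]; exact hidem u
      have h1 : ‖(x : E2 n)‖ = ‖(P - Q) (x : E2 n)‖ := by
        rw [ContinuousLinearMap.sub_apply, hx', hQx, zero_sub, norm_neg]
      have h2 : ‖(P - Q) (x : E2 n)‖ ≤ ‖P - Q‖ * ‖(x : E2 n)‖ := (P - Q).le_opNorm _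
      have : ‖(x : E2 n)‖ = 0 := by nlinarith [norm_nonneg (x : E2 n)]
      exact Subtype.ext (norm_eq_zero.mp this)
    have h1 : finrank ℝ K ≤ finrank ℝ M := LinearMap.finrank_le_finrank_of_injective hf_inj
    have h2 : finrank ℝ M ≤ finrank ℝ K := LinearMap.finrank_le_finrank_of_injective hg_inj
    rw [h (φ j)] at h1 h2
    omega
  exact ⟨M, φ, hφ, hrank, hdist⟩

end Aux5
section Aux6
variable {n : ℕ}
open Module

lemma mem_Sp_of_tendsto {F : E n → Set (E n)} {zb : E2 n} {z : ℕ → E2 n}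
    (hzz : Tendsto z atTop (𝓝 zb)) {L : ℕ → Submodule ℝ (E2 n)}
    (hL : ∀ j, L j ∈ Sp F (z j)) {M : Submodule ℝ (E2 n)} (hM : finrank ℝ M = n)
    (hd : Tendsto (fun j => dZ (L j) M) atTop (𝓝 0)) : M ∈ Sp F zb := by
  have H : ∀ j : ℕ, ∃ w : E2 n, ∃ T : Submodule ℝ (E2 n),
      (w ∈ gph F ∧ finrank ℝ T = n ∧ (T : Set (E2 n)) = tcone (gph F) w) ∧
      dist w (z j) < 1/(j+1) ∧ dZ T (L j) < 1/(j+1) := by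
    intro j
    obtain ⟨-, zk, Lk, hk, hzk, hdk⟩ := hL j
    have hpos : (0:ℝ) < 1/(j+1) := by positivity
    have e1 : ∀ᶠ k in atTop, dist (zk k) (z j) < 1/(j+1) := by
      have := hzk.eventually (Metric.ball_mem_nhds (z j) hpos)
      simpa [Metric.mem_ball] using this
    have e2 : ∀ᶠ k in atTop, dZ (Lk k) (L j) < 1/(j+1) :=
      hdk.eventually (eventually_lt_nhds hpos)
    obtain ⟨k, hk1, hk2⟩ := (e1.and e2).exists
    exact ⟨zk k, Lk k, hk k, hk1, hk2⟩
  choose w T h1 h2 h3 using H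
  have hinv : Tendsto (fun j : ℕ => 1/((j:ℝ)+1)) atTop (𝓝 0) :=
    tendsto_one_div_add_atTop_nhds_zero_nat
  refine ⟨hM, w, T, fun j => (h1 j), ?_, ?_⟩
  · rw [tendsto_iff_dist_tendsto_zero]
    refine squeeze_zero (g := fun j : ℕ => 1/((j:ℝ)+1) + dist (z j) zb)
      (fun j => dist_nonneg) (fun j => ?_) ?_
    · exact (dist_triangle (w j) (z j) zb).trans
        (add_le_add (le_of_lt (h2 j)) (le_refl _))
    · have := (hinv.add (tendsto_iff_dist_tendsto_zero.mp hzz))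
      simpa using this
  · refine squeeze_zero (g := fun j : ℕ => 1/((j:ℝ)+1) + dZ (L j) M)
      (fun j => dZ_nonneg _ _) (fun j => ?_) ?_
    · exact (dZ_triangle (T j) (L j) M).trans
        (add_le_add (le_of_lt (h3 j)) (le_refl _))
    · simpa using hinv.add hd

end Aux6
section Aux7
variable {n : ℕ}
open Module

lemma core {F : E n → Set (E n)} {zb : E2 n} {z : ℕ → E2 n}
    (hzz : Tendsto z atTop (𝓝 zb)) {L : ℕ → Submodule ℝ (E2 n)}
    (hL : ∀ j, L j ∈ Sp F (z j)) {w : ℕ → E2 n} {R : ℝ}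
    (hw : ∀ j, w j ∈ adjS (L j)) (hwR : ∀ j, ‖w j‖ ≤ R) :
    ∃ φ : ℕ → ℕ, StrictMono φ ∧ ∃ M ∈ Sp F zb, ∃ wl ∈ adjS M,
      Tendsto (fun j => w (φ j)) atTop (𝓝 wl) := by
  obtain ⟨M, φ₁, hφ₁, hMrank, hMd⟩ := exists_subseq_proj L (fun j => (hL j).1)
  have hball : ∀ j, w (φ₁ j) ∈ Metric.closedBall (0 : E2 n) R := fun j => by
    simpa [Metric.mem_closedBall, dist_zero_right] using hwR (φ₁ j)
  obtain ⟨wl, -, φ₂, hφ₂, hwl⟩ := (isCompact_closedBall (0 : E2 n) R).tendsto_subseq hball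
  set φ : ℕ → ℕ := φ₁ ∘ φ₂ with hφdef
  have hφ : StrictMono φ := hφ₁.comp hφ₂
  have hdφ : Tendsto (fun j => dZ (L (φ j)) M) atTop (𝓝 0) :=
    hMd.comp hφ₂.tendsto_atTop
  have hzφ : Tendsto (fun j => z (φ j)) atTop (𝓝 zb) :=
    hzz.comp hφ.tendsto_atTop
  have hM : M ∈ Sp F zb := mem_Sp_of_tendsto hzφ (fun j => hL (φ j)) hMrank hdφ
  have hwlM : wl ∈ adjS M := mem_adjS_of_tendsto hdφ (fun j => hw (φ j)) hwl
  exact ⟨φ, hφ, M, hM, wl, hwlM, hwl⟩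

end Aux7
section Aux8
variable {n : ℕ}
open Module

lemma mk2_zero : (mk2 0 0 : E2 n) = 0 := by simp [mk2]

lemma znreg_contra {F : E n → Set (E n)} {zb : E2 n}
    (hZ : ∀ L' ∈ SpStar F zb, L' ∈ Znreg n) {M : Submodule ℝ (E2 n)} (hM : M ∈ Sp F zb)
    {vl : E2 n} (hvl : vl ∈ adjS M) (hsnd : snd2 vl = 0) (hnorm : ‖vl‖ = 1) : False := by
  have h1 : mk2 (fst2 vl) 0 ∈ adjS M := by
    rw [← hsnd, mk2_fst2_snd2]; exact hvl
  have h2 : fst2 vl = 0 := (hZ (adjS M) ⟨M, hM, rfl⟩).2 _ h1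
  have : vl = 0 := by rw [← mk2_fst2_snd2 vl, h2, hsnd, mk2_zero]
  rw [this, norm_zero] at hnorm
  norm_num at hnorm

lemma znreg_near {F : E n → Set (E n)} {zb : E2 n}
    (hZ : ∀ L' ∈ SpStar F zb, L' ∈ Znreg n) :
    ∃ δ > (0:ℝ), ∀ z ∈ gph F, dist z zb < δ → ∀ L ∈ Sp F z, adjS L ∈ Znreg n := by
  by_contra hcon
  push_neg at hcon
  have H : ∀ j : ℕ, ∃ z ∈ gph F, dist z zb < 1/(j+1) ∧
      ∃ L ∈ Sp F z, ∃ y : E n, mk2 y 0 ∈ adjS L ∧ y ≠ 0 := by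
    intro j
    have hpos : (0:ℝ) < 1/(j+1) := by positivity
    obtain ⟨z, hz, hd, L, hL, hnot⟩ := hcon _ hpos
    refine ⟨z, hz, hd, L, hL, ?_⟩
    by_contra hy
    push_neg at hy
    exact hnot ⟨finrank_adjS hL.1, fun y hyy => by_contra (fun h0 => h0 (by
      by_contra h1; exact h1 (hy y hyy)))⟩
  choose z hz hd L hL y hy hy0 using H
  have hzz : Tendsto z atTop (𝓝 zb) := by
    rw [tendsto_iff_dist_tendsto_zero]
    refine squeeze_zero (fun j => dist_nonneg) (fun j => le_of_lt (hd j)) ?_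
    exact tendsto_one_div_add_atTop_nhds_zero_nat
  set w : ℕ → E2 n := fun j => mk2 (‖y j‖⁻¹ • y j) 0 with hwdef
  have hwmem : ∀ j, w j ∈ adjS (L j) := by
    intro j
    have : mk2 (‖y j‖⁻¹ • y j) 0 = ‖y j‖⁻¹ • mk2 (y j) 0 := by
      rw [← mk2_smul]; congr 1; simp
    rw [hwdef]; simp only []
    rw [this]
    exact Submodule.smul_mem _ _ (hy j)
  have hwnorm : ∀ j, ‖w j‖ = 1 := by
    intro j
    rw [hwdef]; simp only []
    rw [norm_mk2_left, norm_smul, norm_inv, norm_norm,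
      inv_mul_cancel₀ (norm_ne_zero_iff.mpr (hy0 j))]
  obtain ⟨φ, hφ, M, hM, wl, hwlM, hwl⟩ :=
    core hzz hL hwmem (fun j => le_of_eq (hwnorm j))
  have hsnd : snd2 wl = 0 := by
    have h1 : Tendsto (fun j => snd2 (w (φ j))) atTop (𝓝 (snd2 wl)) :=
      (continuous_snd2.tendsto wl).comp hwl
    have h2 : (fun j => snd2 (w (φ j))) = fun _ => (0 : E n) := by
      funext j; rw [hwdef]; exact snd2_mk2 _ _
    rw [h2] at h1
    exact tendsto_nhds_unique h1 tendsto_const_nhds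
  have hnorm : ‖wl‖ = 1 := by
    have h1 : Tendsto (fun j => ‖w (φ j)‖) atTop (𝓝 ‖wl‖) :=
      (continuous_norm.tendsto wl).comp hwl
    have h2 : (fun j => ‖w (φ j)‖) = fun _ => (1:ℝ) := funext (fun j => hwnorm (φ j))
    rw [h2] at h1
    exact (tendsto_nhds_unique h1 tendsto_const_nhds)
  exact znreg_contra hZ hM hwlM hsnd hnorm

end Aux8
section Aux9
variable {n : ℕ}
open Module

lemma norm_v_le {w : E2 n} : ‖(max 1 ‖w‖)⁻¹ • w‖ ≤ 1 := by
  have hc0 : (0:ℝ) < max 1 ‖w‖ := lt_of_lt_of_le zero_lt_one (le_max_left _ _)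
  rw [norm_smul, norm_inv, Real.norm_eq_abs, abs_of_pos hc0,
    inv_mul_le_iff₀ hc0]
  simpa using le_max_right 1 ‖w‖

lemma norm_v_eq_one {w : E2 n} (h : (max 1 ‖w‖)⁻¹ < 1) : ‖(max 1 ‖w‖)⁻¹ • w‖ = 1 := by
  have hw1 : (1:ℝ) ≤ ‖w‖ := by
    by_contra hlt
    push_neg at hlt
    rw [max_eq_left (le_of_lt hlt), inv_one] at h
    exact lt_irrefl _ h
  rw [max_eq_right hw1, norm_smul, norm_inv, Real.norm_eq_abs, abs_of_pos
    (lt_of_lt_of_le zero_lt_one hw1), inv_mul_cancel₀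
    (ne_of_gt (lt_of_lt_of_le zero_lt_one hw1))]

lemma bdd_scdregSet {F : E n → Set (E n)} {zb : E2 n}
    (hZ : ∀ L' ∈ SpStar F zb, L' ∈ Znreg n) : BddAbove (scdregSet F zb) := by
  by_contra hcon
  have H : ∀ j : ℕ, ∃ L ∈ Sp F zb, ∃ w : E2 n, w ∈ adjS L ∧ ‖snd2 w‖ ≤ 1 ∧
      (j : ℝ) < ‖fst2 w‖ := by
    intro j
    obtain ⟨r, hr, hrj⟩ := not_bddAbove_iff.mp hcon j
    obtain ⟨L', ⟨L, hL, rfl⟩, w, hw, hsnd2, rfl⟩ := hr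
    exact ⟨L, hL, w, hw, hsnd2, hrj⟩
  choose L hL w hw hsnd hfst using H
  set c : ℕ → ℝ := fun j => max 1 ‖w j‖ with hcdef
  have hc1 : ∀ j, (1:ℝ) ≤ c j := fun j => le_max_left _ _
  have hc0 : ∀ j, (0:ℝ) < c j := fun j => lt_of_lt_of_le zero_lt_one (hc1 j)
  set v : ℕ → E2 n := fun j => (c j)⁻¹ • w j with hvdef
  have hvmem : ∀ j, v j ∈ adjS (L j) := fun j => Submodule.smul_mem _ _ (hw j)
  have hvnorm : ∀ j, ‖v j‖ ≤ 1 := fun j => norm_v_le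
  obtain ⟨φ, hφ, M, hM, vl, hvlM, hvl⟩ :=
    core (tendsto_const_nhds (x := zb)) (fun _ => hL _) hvmem hvnorm
  have hwbig : ∀ j : ℕ, (j:ℝ) ≤ c (φ j) := by
    intro j
    calc (j:ℝ) ≤ (φ j : ℝ) := by exact_mod_cast (hφ.id_le j)
    _ ≤ ‖fst2 (w (φ j))‖ := le_of_lt (hfst (φ j))
    _ ≤ ‖w (φ j)‖ := norm_fst2_le _
    _ ≤ c (φ j) := le_max_right _ _
  have hctop : Tendsto (fun j => c (φ j)) atTop atTop :=
    tendsto_atTop_mono hwbig tendsto_natCast_atTop_atTop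
  have hcinv : Tendsto (fun j => (c (φ j))⁻¹) atTop (𝓝 0) :=
    hctop.inv_tendsto_atTop
  -- snd2 vl = 0
  have hsndvl : snd2 vl = 0 := by
    have h1 : Tendsto (fun j => ‖snd2 (v (φ j))‖) atTop (𝓝 ‖snd2 vl‖) :=
      (continuous_norm.tendsto _).comp ((continuous_snd2.tendsto vl).comp hvl)
    have h2 : Tendsto (fun j => ‖snd2 (v (φ j))‖) atTop (𝓝 0) := by
      refine squeeze_zero (fun j => norm_nonneg _) (fun j => ?_) hcinv
      have : snd2 (v (φ j)) = (c (φ j))⁻¹ • snd2 (w (φ j)) := by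
        rw [hvdef]; simp only []
        have : ((c (φ j))⁻¹ • w (φ j)) = mk2 ((c (φ j))⁻¹ • fst2 (w (φ j)))
            ((c (φ j))⁻¹ • snd2 (w (φ j))) := by
          rw [mk2_smul, mk2_fst2_snd2]
        rw [this, snd2_mk2]
      rw [this, norm_smul, norm_inv, Real.norm_eq_abs, abs_of_pos (hc0 _)]
      calc (c (φ j))⁻¹ * ‖snd2 (w (φ j))‖ ≤ (c (φ j))⁻¹ * 1 := by
            apply mul_le_mul_of_nonneg_left (hsnd _) (le_of_lt (inv_pos.mpr (hc0 _)))
      _ = (c (φ j))⁻¹ := mul_one _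
    have := tendsto_nhds_unique h1 h2
    exact norm_eq_zero.mp this
  -- ‖vl‖ = 1
  have hnormvl : ‖vl‖ = 1 := by
    have h1 : Tendsto (fun j => ‖v (φ j)‖) atTop (𝓝 ‖vl‖) :=
      (continuous_norm.tendsto vl).comp hvl
    have h2 : ∀ᶠ j in atTop, ‖v (φ j)‖ = 1 := by
      have : ∀ᶠ j in atTop, (c (φ j))⁻¹ < 1 :=
        hcinv.eventually (eventually_lt_nhds zero_lt_one)
      exact this.mono (fun j hj => norm_v_eq_one hj)
    have h3 : Tendsto (fun j => ‖v (φ j)‖) atTop (𝓝 1) :=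
      Tendsto.congr' (h2.mono (fun j hj => hj.symm)) tendsto_const_nhds
    exact tendsto_nhds_unique h1 h3
  exact znreg_contra hZ hM hvlM hsndvl hnormvl

end Aux9
section Aux10
variable {n : ℕ}
open Module

lemma snd2_smul (c : ℝ) (w : E2 n) : snd2 (c • w) = c • snd2 w := by
  have : (c • w) = mk2 (c • fst2 w) (c • snd2 w) := by rw [mk2_smul, mk2_fst2_snd2]
  rw [this, snd2_mk2]

lemma scdreg_near {F : E n → Set (E n)} {zb : E2 n}
    (hZ : ∀ L' ∈ SpStar F zb, L' ∈ Znreg n) :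
    ∀ κ : ℝ, scdreg F zb < κ → ∃ δ > (0:ℝ), ∀ z ∈ gph F, dist z zb < δ →
      ∀ r ∈ scdregSet F z, r ≤ κ := by
  intro κ hκ
  by_contra hcon
  push_neg at hcon
  have H : ∀ j : ℕ, ∃ z ∈ gph F, dist z zb < 1/(j+1) ∧
      ∃ L ∈ Sp F z, ∃ w : E2 n, w ∈ adjS L ∧ ‖snd2 w‖ ≤ 1 ∧ κ < ‖fst2 w‖ := by
    intro j
    have hpos : (0:ℝ) < 1/(j+1) := by positivity
    obtain ⟨z, hz, hd, r, hr, hrκ⟩ := hcon _ hpos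
    obtain ⟨L', ⟨L, hL, rfl⟩, w, hw, hsnd2, rfl⟩ := hr
    exact ⟨z, hz, hd, L, hL, w, hw, hsnd2, hrκ⟩
  choose z hz hd L hL w hw hsnd hfst using H
  have hzz : Tendsto z atTop (𝓝 zb) := by
    rw [tendsto_iff_dist_tendsto_zero]
    exact squeeze_zero (fun j => dist_nonneg) (fun j => le_of_lt (hd j))
      tendsto_one_div_add_atTop_nhds_zero_nat
  set c : ℕ → ℝ := fun j => max 1 ‖w j‖ with hcdef
  have hc1 : ∀ j, (1:ℝ) ≤ c j := fun j => le_max_left _ _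
  have hc0 : ∀ j, (0:ℝ) < c j := fun j => lt_of_lt_of_le zero_lt_one (hc1 j)
  set v : ℕ → E2 n := fun j => (c j)⁻¹ • w j with hvdef
  have hvmem : ∀ j, v j ∈ adjS (L j) := fun j => Submodule.smul_mem _ _ (hw j)
  have hvnorm : ∀ j, ‖v j‖ ≤ 1 := fun j => norm_v_le
  obtain ⟨φ₁, hφ₁, M, hM, vl, hvlM, hvl⟩ := core hzz hL hvmem hvnorm
  -- extract further subsequence to make (c ∘ φ₁)⁻¹ converge
  have hmem : ∀ j, (c (φ₁ j))⁻¹ ∈ Set.Icc (0:ℝ) 1 := fun j =>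
    ⟨le_of_lt (inv_pos.mpr (hc0 _)), inv_le_one_of_one_le₀ (hc1 _)⟩
  obtain ⟨a, ha, φ₂, hφ₂, hca⟩ := (isCompact_Icc (a := (0:ℝ)) (b := 1)).tendsto_subseq hmem
  set ψ : ℕ → ℕ := φ₁ ∘ φ₂ with hψdef
  have hvψ : Tendsto (fun j => v (ψ j)) atTop (𝓝 vl) := hvl.comp hφ₂.tendsto_atTop
  have hcψ : Tendsto (fun j => (c (ψ j))⁻¹) atTop (𝓝 a) := hca
  rcases eq_or_lt_of_le ha.1 with ha0 | hapos
  · -- a = 0 : unbounded case, contradiction with regularity at zb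
    rw [← ha0] at hcψ
    have hsndvl : snd2 vl = 0 := by
      have h1 : Tendsto (fun j => ‖snd2 (v (ψ j))‖) atTop (𝓝 ‖snd2 vl‖) :=
        (continuous_norm.tendsto _).comp ((continuous_snd2.tendsto vl).comp hvψ)
      have h2 : Tendsto (fun j => ‖snd2 (v (ψ j))‖) atTop (𝓝 0) := by
        refine squeeze_zero (fun j => norm_nonneg _) (fun j => ?_) hcψ
        rw [hvdef]; simp only []
        rw [snd2_smul, norm_smul, norm_inv, Real.norm_eq_abs, abs_of_pos (hc0 _)]
        calc (c (ψ j))⁻¹ * ‖snd2 (w (ψ j))‖ ≤ (c (ψ j))⁻¹ * 1 :=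
              mul_le_mul_of_nonneg_left (hsnd _) (le_of_lt (inv_pos.mpr (hc0 _)))
        _ = (c (ψ j))⁻¹ := mul_one _
      exact norm_eq_zero.mp (tendsto_nhds_unique h1 h2)
    have hnormvl : ‖vl‖ = 1 := by
      have h1 : Tendsto (fun j => ‖v (ψ j)‖) atTop (𝓝 ‖vl‖) :=
        (continuous_norm.tendsto vl).comp hvψ
      have h2 : ∀ᶠ j in atTop, ‖v (ψ j)‖ = 1 := by
        have := hcψ.eventually (eventually_lt_nhds zero_lt_one)
        exact this.mono (fun j hj => norm_v_eq_one hj)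
      exact tendsto_nhds_unique h1
        (Tendsto.congr' (h2.mono (fun j hj => hj.symm)) tendsto_const_nhds)
    exact znreg_contra hZ hM hvlM hsndvl hnormvl
  · -- a > 0 : bounded case
    have ha0 : a ≠ 0 := ne_of_gt hapos
    have hcψ' : Tendsto (fun j => c (ψ j)) atTop (𝓝 a⁻¹) := by
      have := hcψ.inv₀ ha0
      simpa using this
    have hwψ : Tendsto (fun j => w (ψ j)) atTop (𝓝 (a⁻¹ • vl)) := by
      have heq : (fun j => w (ψ j)) = fun j => c (ψ j) • v (ψ j) := by
        funext j
        rw [hvdef]; simp only []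
        rw [smul_inv_smul₀ (ne_of_gt (hc0 _))]
      rw [heq]
      exact hcψ'.smul hvψ
    set wlim : E2 n := a⁻¹ • vl with hwlimdef
    have hwlimM : wlim ∈ adjS M := Submodule.smul_mem _ _ hvlM
    have hsndlim : ‖snd2 wlim‖ ≤ 1 := by
      have h1 : Tendsto (fun j => ‖snd2 (w (ψ j))‖) atTop (𝓝 ‖snd2 wlim‖) :=
        (continuous_norm.tendsto _).comp ((continuous_snd2.tendsto _).comp hwψ)
      exact le_of_tendsto h1 (Eventually.of_forall (fun j => hsnd _))
    have hfstlim : κ ≤ ‖fst2 wlim‖ := by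
      have h1 : Tendsto (fun j => ‖fst2 (w (ψ j))‖) atTop (𝓝 ‖fst2 wlim‖) :=
        (continuous_norm.tendsto _).comp ((continuous_fst2.tendsto _).comp hwψ)
      exact ge_of_tendsto h1 (Eventually.of_forall (fun j => le_of_lt (hfst _)))
    have hmem' : ‖fst2 wlim‖ ∈ scdregSet F zb :=
      ⟨adjS M, ⟨M, hM, rfl⟩, wlim, hwlimM, hsndlim, rfl⟩
    have : ‖fst2 wlim‖ ≤ scdreg F zb := le_csSup (bdd_scdregSet hZ) hmem'
    linarith

end Aux10

/- STATEMENT 13 -/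
theorem stmt13 (n : ℕ) (F : E n → Set (E n)) (zb : E2 n) (hzb : zb ∈ gph F)
    (hreg : SCDRegularAround F zb) :
    (∃ δ > (0 : ℝ), ∀ z ∈ gph F, dist z zb < δ → SCDRegularAround F z) ∧
    ∀ κ : ℝ, scdreg F zb < κ → ∃ δ > (0 : ℝ), ∀ z ∈ gph F, dist z zb < δ →
      ∀ r ∈ scdregSet F z, r ≤ κ := by
  obtain ⟨hA, hZ⟩ := hreg
  obtain ⟨δ₀, hδ₀, hδ₀p⟩ := hA
  obtain ⟨δ₁, hδ₁, hδ₁p⟩ := znreg_near hZ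
  refine ⟨⟨min δ₀ δ₁, lt_min hδ₀ hδ₁, fun z hzg hzd => ?_⟩, scdreg_near hZ⟩
  have hzd₀ : dist z zb < δ₀ := lt_of_lt_of_le hzd (min_le_left _ _)
  have hzd₁ : dist z zb < δ₁ := lt_of_lt_of_le hzd (min_le_right _ _)
  constructor
  · refine ⟨δ₀ - dist z zb, sub_pos.mpr hzd₀, fun z' hz'g hz'd => ?_⟩
    refine hδ₀p z' hz'g ?_
    calc dist z' zb ≤ dist z' z + dist z zb := dist_triangle _ _ _
    _ < (δ₀ - dist z zb) + dist z zb := by linarith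
    _ = δ₀ := by ring
  · rintro L' ⟨L, hL, rfl⟩
    exact hδ₁p z hzg hzd₁ L hL

end SCD
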